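/- Let n ≥ 1 and for 0 ≤ i ≤ n−1 set b[i](h) for a polynomial ξ of degree ≤ 2n−1 as b[i] = ξ^{(i)}(h) − ∑_{j=i}^{n-1} h^{j-i}/(j-i)! ξ^{(j)}(0). Then for every k with 0 ≤ k ≤ n−1: ∑_{i: i ≥ n-1-k} b[i] (-1)^{n-i-1} (n+k)!/(k+i-n+1)! h^{k+i-n+1} = (n+k)! (-1)^k (ξ^{(n-k-1)}(h) − ξ^{(n-k-1)}(0)) + ∑_{i=0}^{k-1} (-1)^i (n+k)!/(k-i)! ξ^{(n-i-1)}(h) h^{k-i}. -/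

import Mathlib

open Finset

lemma alt_sum_fact (m : ℕ) :
    ∑ t ∈ Finset.range (m + 1),
        (-1 : ℝ) ^ t / (((m - t).factorial : ℝ) * (t.factorial : ℝ)) =
      if m = 0 then 1 else 0 := by
  have h : (∑ t ∈ Finset.range (m + 1), ((-1 : ℝ) ^ t * (m.choose t : ℝ)))
      = if m = 0 then 1 else 0 := by
    have := Int.alternating_sum_range_choose (n := m)
    have := congrArg (fun z : ℤ => (z : ℝ)) this
    push_cast at this
    simpa using this
  have hm : (m.factorial : ℝ) ≠ 0 := Nat.cast_ne_zero.mpr (Nat.factorial_ne_zero _)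
  calc ∑ t ∈ Finset.range (m + 1),
        (-1 : ℝ) ^ t / (((m - t).factorial : ℝ) * (t.factorial : ℝ))
      = ∑ t ∈ Finset.range (m + 1),
          (-1 : ℝ) ^ t * (m.choose t : ℝ) / (m.factorial : ℝ) := by
        refine Finset.sum_congr rfl fun t ht => ?_
        have htm : t ≤ m := Nat.lt_succ_iff.mp (Finset.mem_range.mp ht)
        have hfac : (m.choose t : ℝ) * (((m - t).factorial : ℝ) * (t.factorial : ℝ))
            = (m.factorial : ℝ) := by
          have := Nat.choose_mul_factorial_mul_factorial htm
          push_cast [← this]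
          ring
        have h1 : ((m - t).factorial : ℝ) ≠ 0 := Nat.cast_ne_zero.mpr (Nat.factorial_ne_zero _)
        have h2 : ((t.factorial : ℝ)) ≠ 0 := Nat.cast_ne_zero.mpr (Nat.factorial_ne_zero _)
        field_simp
        rw [← hfac]; ring
    _ = (∑ t ∈ Finset.range (m + 1), (-1 : ℝ) ^ t * (m.choose t : ℝ)) / (m.factorial : ℝ) := by
        rw [Finset.sum_div]
    _ = (if m = 0 then 1 else 0) / (m.factorial : ℝ) := by rw [h]
    _ = if m = 0 then 1 else 0 := by
        split
        · next hm0 => subst hm0; norm_num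
        · simp

lemma key_identity (n k : ℕ) (hn : 1 ≤ n) (hk : k ≤ n - 1) (h : ℝ) (F G : ℕ → ℝ) :
    (∑ i ∈ Finset.Icc (n - 1 - k) (n - 1),
        (F i - ∑ j ∈ Finset.Icc i (n - 1),
              h ^ (j - i) / ((j - i).factorial : ℝ) * G j) *
          ((-1 : ℝ) ^ (n - i - 1) * ((n + k).factorial : ℝ) /
            ((k + i + 1 - n).factorial : ℝ) * h ^ (k + i + 1 - n)))
      = ((n + k).factorial : ℝ) * (-1 : ℝ) ^ k * (F (n - k - 1) - G (n - k - 1))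
        + ∑ i ∈ Finset.range k,
            (-1 : ℝ) ^ i * ((n + k).factorial : ℝ) / ((k - i).factorial : ℝ) *
              F (n - i - 1) * h ^ (k - i) := by
  set N : ℝ := ((n + k).factorial : ℝ) with hN
  -- reindexing lemma
  have e2 : ∀ r : ℕ, r ≤ n - 1 → ∀ f : ℕ → ℝ,
      ∑ j ∈ Finset.Icc (n - 1 - r) (n - 1), f j = ∑ s ∈ Finset.range (r + 1), f (n - 1 - s) := by
    intro r hr f
    have himg : Finset.Icc (n - 1 - r) (n - 1)
        = (Finset.range (r + 1)).image (fun s => n - 1 - s) := by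
      ext i
      simp only [Finset.mem_Icc, Finset.mem_image, Finset.mem_range]
      constructor
      · intro hi; exact ⟨n - 1 - i, by omega, by omega⟩
      · rintro ⟨s, hs, rfl⟩; omega
    rw [himg, Finset.sum_image]
    intro x hx y hy hxy
    simp only [Finset.mem_coe, Finset.mem_range] at hx hy hxy
    omega
  have trans : (∑ i ∈ Finset.Icc (n - 1 - k) (n - 1),
        (F i - ∑ j ∈ Finset.Icc i (n - 1),
              h ^ (j - i) / ((j - i).factorial : ℝ) * G j) *
          ((-1 : ℝ) ^ (n - i - 1) * N / ((k + i + 1 - n).factorial : ℝ) * h ^ (k + i + 1 - n)))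
      = ∑ r ∈ Finset.range (k + 1),
          (F (n - 1 - r) - ∑ s ∈ Finset.range (r + 1),
              h ^ (r - s) / ((r - s).factorial : ℝ) * G (n - 1 - s)) *
            ((-1 : ℝ) ^ r * N / ((k - r).factorial : ℝ) * h ^ (k - r)) := by
    rw [e2 k hk]
    refine Finset.sum_congr rfl fun r hr => ?_
    have hr' : r ≤ k := by simpa using Nat.lt_succ_iff.mp (Finset.mem_range.mp hr)
    have h1 : n - (n - 1 - r) - 1 = r := by omega
    have h2 : k + (n - 1 - r) + 1 - n = k - r := by omega
    rw [h1, h2, e2 r (by omega)]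
    congr 1
    congr 1
    refine Finset.sum_congr rfl fun s hs => ?_
    have hs' : s ≤ r := by simpa using Nat.lt_succ_iff.mp (Finset.mem_range.mp hs)
    have h3 : n - 1 - s - (n - 1 - r) = r - s := by omega
    rw [h3]
  rw [trans]
  -- Part B : the double sum with G
  have PB : (∑ r ∈ Finset.range (k + 1),
        (∑ s ∈ Finset.range (r + 1),
            h ^ (r - s) / ((r - s).factorial : ℝ) * G (n - 1 - s)) *
          ((-1 : ℝ) ^ r * N / ((k - r).factorial : ℝ) * h ^ (k - r)))
      = N * (-1 : ℝ) ^ k * G (n - 1 - k) := by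
    simp only [Finset.sum_mul]
    rw [Finset.sum_comm' (s' := fun s => Finset.Icc s k) (t' := Finset.range (k + 1))
      (by intro x y; simp only [Finset.mem_range, Finset.mem_Icc]; omega)]
    have hterm : ∀ s ∈ Finset.range (k + 1),
        (∑ r ∈ Finset.Icc s k,
            h ^ (r - s) / ((r - s).factorial : ℝ) * G (n - 1 - s) *
              ((-1 : ℝ) ^ r * N / ((k - r).factorial : ℝ) * h ^ (k - r)))
          = if s = k then N * (-1 : ℝ) ^ k * G (n - 1 - k) else 0 := by
      intro s hs
      have hs' : s ≤ k := by simpa using Nat.lt_succ_iff.mp (Finset.mem_range.mp hs)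
      have himg : Finset.Icc s k = (Finset.range (k - s + 1)).image (fun t => s + t) := by
        ext i
        simp only [Finset.mem_Icc, Finset.mem_image, Finset.mem_range]
        constructor
        · intro hi; exact ⟨i - s, by omega, by omega⟩
        · rintro ⟨t, ht, rfl⟩; omega
      rw [himg, Finset.sum_image (by intro x hx y hy hxy; exact Nat.add_left_cancel hxy)]
      have step : ∀ t ∈ Finset.range (k - s + 1),
          h ^ (s + t - s) / ((s + t - s).factorial : ℝ) * G (n - 1 - s) *
              ((-1 : ℝ) ^ (s + t) * N / ((k - (s + t)).factorial : ℝ) * h ^ (k - (s + t)))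
            = (G (n - 1 - s) * (-1 : ℝ) ^ s * N * h ^ (k - s)) *
                ((-1 : ℝ) ^ t / (((k - s - t).factorial : ℝ) * (t.factorial : ℝ))) := by
        intro t ht
        have ht' : t ≤ k - s := by simpa using Nat.lt_succ_iff.mp (Finset.mem_range.mp ht)
        have h4 : s + t - s = t := by omega
        have h5 : k - (s + t) = k - s - t := by omega
        have h6 : h ^ t * h ^ (k - s - t) = h ^ (k - s) := by
          rw [← pow_add]; congr 1; omega
        rw [h4, h5, pow_add, ← h6]
        ring
      rw [Finset.sum_congr rfl step, ← Finset.mul_sum, alt_sum_fact]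
      by_cases hsk : s = k
      · subst hsk
        simp
        ring
      · have : k - s ≠ 0 := by omega
        rw [if_neg this, if_neg hsk, mul_zero]
    rw [Finset.sum_congr rfl hterm, Finset.sum_ite_eq' (Finset.range (k + 1)) k]
    simp
  -- Part A : the sum with F
  have PA : (∑ r ∈ Finset.range (k + 1),
        F (n - 1 - r) * ((-1 : ℝ) ^ r * N / ((k - r).factorial : ℝ) * h ^ (k - r)))
      = N * (-1 : ℝ) ^ k * F (n - 1 - k)
        + ∑ i ∈ Finset.range k,
            (-1 : ℝ) ^ i * N / ((k - i).factorial : ℝ) * F (n - i - 1) * h ^ (k - i) := by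
    rw [Finset.sum_range_succ, Nat.sub_self]
    have : ∑ r ∈ Finset.range k,
        F (n - 1 - r) * ((-1 : ℝ) ^ r * N / ((k - r).factorial : ℝ) * h ^ (k - r))
      = ∑ i ∈ Finset.range k,
          (-1 : ℝ) ^ i * N / ((k - i).factorial : ℝ) * F (n - i - 1) * h ^ (k - i) := by
      refine Finset.sum_congr rfl fun i hi => ?_
      have : n - 1 - i = n - i - 1 := by omega
      rw [this]; ring
    rw [this]
    simp [Nat.factorial]
    ring
  simp only [sub_mul]
  rw [Finset.sum_sub_distrib, PA, PB]
  have : n - k - 1 = n - 1 - k := by omega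
  rw [this]
  ring




theorem E_row_eq_b_transpose_B (n : ℕ) (hn : 1 ≤ n) (h : ℝ) (hh : 0 < h)
    (a : ℕ → ℝ) (k : ℕ) (hk : k ≤ n - 1) :
    (∑ i ∈ Finset.Icc (n - 1 - k) (n - 1),
        (iteratedDeriv i (fun t : ℝ => ∑ m ∈ Finset.range (2 * n), a m * t ^ m) h
          - ∑ j ∈ Finset.Icc i (n - 1),
              h ^ (j - i) / ((j - i).factorial : ℝ) *
                iteratedDeriv j (fun t : ℝ => ∑ m ∈ Finset.range (2 * n), a m * t ^ m) 0) *
          ((-1 : ℝ) ^ (n - i - 1) * ((n + k).factorial : ℝ) /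
            ((k + i + 1 - n).factorial : ℝ) * h ^ (k + i + 1 - n)))
      = ((n + k).factorial : ℝ) * (-1 : ℝ) ^ k *
          (iteratedDeriv (n - k - 1) (fun t : ℝ => ∑ m ∈ Finset.range (2 * n), a m * t ^ m) h
            - iteratedDeriv (n - k - 1) (fun t : ℝ => ∑ m ∈ Finset.range (2 * n), a m * t ^ m) 0)
        + ∑ i ∈ Finset.range k,
            (-1 : ℝ) ^ i * ((n + k).factorial : ℝ) / ((k - i).factorial : ℝ) *
              iteratedDeriv (n - i - 1) (fun t : ℝ => ∑ m ∈ Finset.range (2 * n), a m * t ^ m) h *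
              h ^ (k - i) := by
  exact key_identity n k hn hk h
    (fun i => iteratedDeriv i (fun t : ℝ => ∑ m ∈ Finset.range (2 * n), a m * t ^ m) h)
    (fun i => iteratedDeriv i (fun t : ℝ => ∑ m ∈ Finset.range (2 * n), a m * t ^ m) 0)
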